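/- Let Y be a real vector space, D ⊂ Y a convex cone, and H ⊂ D\(−D) a D-convex set (i.e., H + D is convex). Define ξ_H : Y → ℝ ∪ {±∞} by ξ_H(y) = inf{t ∈ ℝ : y ∈ tH − D} (with ξ_H(y) = +∞ if no such t exists). Then there exists z ∈ Y with ξ_H(z) = −∞ if and only if 0 ∈ vcl(H + D), where vcl(A) = {y ∈ Y : ∃ v ∈ Y, ∃ λₙ ≥ 0, λₙ → 0, with y + λₙ v ∈ A for all n}. -/

import Mathlib

open Filter Topology Pointwise

/-- Vector closure of a set. -/
def vcl {Y : Type*} [AddCommGroup Y] [Module ℝ Y] (A : Set Y) : Set Y :=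
  {y | ∃ v : Y, ∃ l : ℕ → ℝ, (∀ n, 0 ≤ l n) ∧ Tendsto l atTop (nhds 0) ∧
    ∀ n, y + l n • v ∈ A}

/-- Generalized Gerstewitz function generated by `D` and `H`. -/
noncomputable def xiH {Y : Type*} [AddCommGroup Y] [Module ℝ Y] (D H : Set Y) (y : Y) : EReal :=
  sInf ((fun t : ℝ => (t : EReal)) '' {t : ℝ | y ∈ t • H - D})

theorem xiH_eq_bot_iff {Y : Type*} [AddCommGroup Y] [Module ℝ Y] (D H : Set Y)
    (hDadd : ∀ a ∈ D, ∀ b ∈ D, a + b ∈ D)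
    (hDsmul : ∀ α : ℝ, 0 ≤ α → ∀ d ∈ D, α • d ∈ D)
    (hH : H ⊆ D \ (-D)) (hconv : Convex ℝ (H + D)) :
    (∃ z : Y, xiH D H z = ⊥) ↔ (0 : Y) ∈ vcl (H + D) := by
  constructor
  · rintro ⟨z, hz⟩
    rw [xiH, sInf_eq_bot] at hz
    have key : ∀ n : ℕ, ∃ t : ℝ, t < -((n : ℝ) + 1) ∧ z ∈ t • H - D := by
      intro n
      set r : ℝ := -((n : ℝ) + 1) with hr
      obtain ⟨a, ha, hab⟩ := hz ((r : ℝ) : EReal) (EReal.bot_lt_coe _)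
      obtain ⟨t, ht, rfl⟩ := ha
      have hab' : ((t : ℝ) : EReal) < ((r : ℝ) : EReal) := hab
      exact ⟨t, by exact_mod_cast hab', ht⟩
    choose t ht hmem using key
    have htneg : ∀ n : ℕ, (0 : ℝ) < -(t n) := by
      intro n
      have := ht n
      nlinarith [Nat.cast_nonneg (α := ℝ) n]
    refine ⟨-z, fun n => (-(t n))⁻¹, fun n => (inv_nonneg.mpr (htneg n).le), ?_, ?_⟩
    · apply squeeze_zero (fun n => inv_nonneg.mpr (htneg n).le)
        (g := fun n : ℕ => ((n : ℝ) + 1)⁻¹)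
      · intro n
        apply inv_anti₀ (by positivity)
        have := ht n; linarith
      · exact tendsto_one_div_add_atTop_nhds_zero_nat.congr (fun n => one_div _)
    · intro n
      obtain ⟨x, hx, d, hd, hxd⟩ := hmem n
      obtain ⟨h, hh, rfl⟩ := hx
      -- hxd : t n • h - d = z
      refine ⟨h, hh, (-(t n))⁻¹ • d, hDsmul _ (inv_nonneg.mpr (htneg n).le) d hd, ?_⟩
      have hne : -(t n) ≠ 0 := (htneg n).ne'
      rw [← hxd]
      rw [zero_add, neg_sub, smul_sub, smul_smul]
      rw [show (-(t n))⁻¹ * t n = -1 by rw [inv_neg, neg_mul, inv_mul_cancel₀ (neg_ne_zero.mp hne)]]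
      rw [neg_one_smul]
      abel
  · rintro ⟨v, l, hl0, hlim, hmem⟩
    have hpos : ∀ n, 0 < l n := by
      intro n
      rcases (hl0 n).lt_or_eq with h | h
      · exact h
      · exfalso
        obtain ⟨h', hh', d, hd, heq⟩ := hmem n
        rw [← h, zero_smul, add_zero] at heq
        have : h' ∈ -D := by
          have : h' = -d := by simp only at heq; exact eq_neg_of_add_eq_zero_left heq
          rw [this]; exact Set.neg_mem_neg.mpr hd
        exact (hH hh').2 this
    refine ⟨-v, ?_⟩
    rw [xiH, sInf_eq_bot]
    intro b hb
    have hmem' : ∀ n, (-(l n)⁻¹ : ℝ) ∈ {t : ℝ | -v ∈ t • H - D} := by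
      intro n
      obtain ⟨h', hh', d, hd, heq'⟩ := hmem n
      have heq : h' + d = l n • v := by simpa using heq'
      refine ⟨(-(l n)⁻¹) • h', Set.smul_mem_smul_set hh',
        (l n)⁻¹ • d, hDsmul _ (inv_nonneg.mpr (hl0 n)) d hd, ?_⟩
      have hne : l n ≠ 0 := (hpos n).ne'
      have : (l n)⁻¹ • (h' + d) = v := by
        rw [heq, smul_smul, inv_mul_cancel₀ hne, one_smul]
      rw [← this]
      rw [smul_add]
      module
    induction b using EReal.rec with
    | bot => exact absurd hb (lt_irrefl _)
    | top =>
      exact ⟨((-(l 0)⁻¹ : ℝ) : EReal), ⟨_, hmem' 0, rfl⟩, EReal.coe_lt_top _⟩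
    | coe r =>
      set ε : ℝ := (max (-r) 0 + 1)⁻¹ with hε
      have hεpos : 0 < ε := by positivity
      obtain ⟨n, hn⟩ := (hlim.eventually (eventually_lt_nhds hεpos)).exists
      refine ⟨((-(l n)⁻¹ : ℝ) : EReal), ⟨_, hmem' n, rfl⟩, ?_⟩
      have h1 : ε⁻¹ < (l n)⁻¹ := inv_strictAnti₀ (hpos n) hn
      rw [hε, inv_inv] at h1
      have h2 : -r ≤ max (-r) 0 := le_max_left _ _
      have : -(l n)⁻¹ < r := by linarith
      exact_mod_cast this
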